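/- The series Σ_{k=0}^∞ ((1/2)_k)^4 / ((2)_k)^4 · (4k + 3) and Σ_{j=0}^∞ (−1/4)^j · ((3/2)_j)^5 / ((2)_j)^5 · (20j² + 48j + 29) both converge, and Σ_{k=0}^∞ ((1/2)_k)^4 / ((2)_k)^4 · (4k + 3) = (1/8) · Σ_{j=0}^∞ (−1/4)^j · ((3/2)_j)^5 / ((2)_j)^5 · (20j² + 48j + 29). -/

import Mathlib

noncomputable def poch (x : ℝ) (k : ℕ) : ℝ := ∏ i ∈ Finset.range k, (x + i)

lemma poch_zero (x : ℝ) : poch x 0 = 1 := Finset.prod_range_zero _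

lemma poch_succ (x : ℝ) (k : ℕ) : poch x (k+1) = poch x k * (x + k) :=
  Finset.prod_range_succ _ _

lemma poch_pos {x : ℝ} (hx : 0 < x) (k : ℕ) : 0 < poch x k := by
  refine Finset.prod_pos fun i _ => ?_
  have : (0:ℝ) ≤ i := Nat.cast_nonneg i
  linarith

lemma poch_add_one (x : ℝ) (k : ℕ) : poch (x+1) k * x = poch x k * (x + k) := by
  induction k with
  | zero => simp [poch_zero]
  | succ k ih =>
      rw [poch_succ, poch_succ]
      push_cast
      linear_combination (x + 1 + (k:ℝ)) * ih

lemma poch_le {x y : ℝ} (hx : 0 < x) (h : x ≤ y) (k : ℕ) : poch x k ≤ poch y k := by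
  refine Finset.prod_le_prod (fun i _ => ?_) (fun i _ => ?_)
  · have : (0:ℝ) ≤ i := Nat.cast_nonneg i
    linarith
  · linarith

noncomputable def wzK (n k : ℕ) : ℝ :=
  poch (1/2) n ^ 4 / poch 2 n ^ 4 *
    ((-1/4 : ℝ) ^ k * poch (3/2) k ^ 5 / (poch (2 + (n:ℝ)) k ^ 4 * poch 2 k))

noncomputable def wzF (n k : ℕ) : ℝ :=
  wzK n k * ((8*(n:ℝ)^2 + 28*n + 29 + (24*n+48)*k + 20*(k:ℝ)^2)/8)

noncomputable def wzG (n k : ℕ) : ℝ :=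
  wzK n k * (3 + 4*(n:ℝ) + (5+4*(n:ℝ))*k + 2*(k:ℝ)^2)

lemma wz_id (n k : ℕ) : wzF (n+1) k - wzF n k = wzG n (k+1) - wzG n k := by
  have hb := poch_pos (show (0:ℝ) < 2 by norm_num) n
  have hd := poch_pos (show (0:ℝ) < 2 + (n:ℝ) by positivity) k
  have he := poch_pos (show (0:ℝ) < 2 by norm_num) k
  have hn2 : (2 + (n:ℝ)) ≠ 0 := by positivity
  have h6 : poch (2 + (n:ℝ) + 1) k * (2 + (n:ℝ)) = poch (2 + (n:ℝ)) k * (2 + (n:ℝ) + k) :=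
    poch_add_one _ k
  have hs : ((-1/4:ℝ)) ^ (k+1) = (-1/4:ℝ)^k * (-1/4) := pow_succ _ _
  simp only [wzF, wzG, wzK, poch_succ]
  push_cast
  rw [hs]
  set a := poch (1/2) n with ha
  set b := poch 2 n with hbb
  set c := poch (3/2) k with hc
  set d := poch (2 + (n:ℝ)) k with hd2
  set e := poch 2 k with he2
  set s := ((-1/4:ℝ))^k with hs2
  have h7 : poch (2 + ((n:ℝ) + 1)) k = d * (2 + (n:ℝ) + k) / (2 + (n:ℝ)) := by
    rw [eq_div_iff hn2]
    have : (2 + ((n:ℝ) + 1)) = (2 + (n:ℝ)) + 1 := by ring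
    rw [this]
    exact h6
  rw [h7]
  have hb' : b ≠ 0 := ne_of_gt hb
  have hd' : d ≠ 0 := ne_of_gt hd
  have he' : e ≠ 0 := ne_of_gt he
  field_simp
  ring

open Filter Finset Topology

lemma poch_ratio_le (n : ℕ) : poch (1/2) n / poch 2 n ≤ 1/(n+1 : ℝ) := by
  have ha := poch_pos (show (0:ℝ) < 1/2 by norm_num) n
  have h1 := poch_pos (show (0:ℝ) < 1 by norm_num) n
  have hb := poch_pos (show (0:ℝ) < 2 by norm_num) n
  have hle : poch (1/2) n ≤ poch 1 n := poch_le (by norm_num) (by norm_num) n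
  have key : poch 1 n * (n+1 : ℝ) = poch 2 n := by
    have := poch_add_one (1:ℝ) n
    have h2 : (1:ℝ)+1 = 2 := by norm_num
    rw [h2] at this
    simpa [mul_comm, add_comm] using this.symm
  rw [div_le_div_iff₀ hb (by positivity)]
  calc poch (1/2) n * (n+1:ℝ) ≤ poch 1 n * (n+1:ℝ) := by
        have : (0:ℝ) ≤ (n:ℝ)+1 := by positivity
        nlinarith
    _ = poch 2 n := key
    _ = 1 * poch 2 n := by ring
  
lemma wzK_abs_le (n k : ℕ) :
    |wzK n k| ≤ (1/4:ℝ)^k * (poch (1/2) n ^ 4 / poch 2 n ^ 4) := by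
  have ha := poch_pos (show (0:ℝ) < 1/2 by norm_num) n
  have hb := poch_pos (show (0:ℝ) < 2 by norm_num) n
  have hc := poch_pos (show (0:ℝ) < 3/2 by norm_num) k
  have hd := poch_pos (show (0:ℝ) < 2 + (n:ℝ) by positivity) k
  have he := poch_pos (show (0:ℝ) < 2 by norm_num) k
  have hcd : poch (3/2) k ≤ poch (2+(n:ℝ)) k := by
    refine poch_le (by norm_num) ?_ k
    have : (0:ℝ) ≤ n := Nat.cast_nonneg n
    linarith
  have hce : poch (3/2) k ≤ poch 2 k := poch_le (by norm_num) (by norm_num) k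
  have h1 : poch (3/2) k ^ 5 ≤ poch (2+(n:ℝ)) k ^ 4 * poch 2 k := by
    have h4 : poch (3/2) k ^ 4 ≤ poch (2+(n:ℝ)) k ^ 4 := pow_le_pow_left₀ hc.le hcd 4
    calc poch (3/2) k ^ 5 = poch (3/2) k ^ 4 * poch (3/2) k := by ring
      _ ≤ poch (2+(n:ℝ)) k ^ 4 * poch (3/2) k := mul_le_mul_of_nonneg_right h4 hc.le
      _ ≤ poch (2+(n:ℝ)) k ^ 4 * poch 2 k := mul_le_mul_of_nonneg_left hce (by positivity)
  have habs : |wzK n k| = (poch (1/2) n ^ 4 / poch 2 n ^ 4) *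
      ((1/4:ℝ)^k * (poch (3/2) k ^ 5 / (poch (2+(n:ℝ)) k ^ 4 * poch 2 k))) := by
    rw [wzK, abs_mul]
    congr 1
    · rw [abs_of_nonneg (by positivity)]
    · rw [abs_div, abs_mul, abs_pow, abs_of_nonneg (show (0:ℝ) ≤ poch (3/2) k ^5 by positivity),
        abs_of_nonneg (show (0:ℝ) ≤ poch (2+(n:ℝ)) k ^ 4 * poch 2 k by positivity)]
      have : |(-1/4:ℝ)| = 1/4 := by rw [abs_of_nonpos (by norm_num)]; norm_num
      rw [this]
      ring
  rw [habs]
  have h2 : poch (3/2) k ^ 5 / (poch (2+(n:ℝ)) k ^ 4 * poch 2 k) ≤ 1 :=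
    div_le_one_of_le₀ h1 (by positivity)
  calc (poch (1/2) n ^ 4 / poch 2 n ^ 4) * ((1/4:ℝ)^k * (poch (3/2) k ^ 5 / (poch (2+(n:ℝ)) k ^ 4 * poch 2 k)))
      ≤ (poch (1/2) n ^ 4 / poch 2 n ^ 4) * ((1/4:ℝ)^k * 1) := by
        apply mul_le_mul_of_nonneg_left _ (by positivity)
        apply mul_le_mul_of_nonneg_left h2 (by positivity)
    _ = (1/4:ℝ)^k * (poch (1/2) n ^ 4 / poch 2 n ^ 4) := by ring

lemma summable_quad (c0 c1 c2 : ℝ) :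
    Summable (fun k : ℕ => (1/4:ℝ)^k * (c0 + c1*k + c2*(k:ℝ)^2)) := by
  have h0 : Summable (fun k : ℕ => (1/4:ℝ)^k) :=
    summable_geometric_of_lt_one (by norm_num) (by norm_num)
  have h1 : Summable (fun k : ℕ => (k:ℝ)^1 * (1/4:ℝ)^k) :=
    summable_pow_mul_geometric_of_norm_lt_one 1 (by rw [Real.norm_eq_abs, abs_of_nonneg]; norm_num; norm_num)
  have h2 : Summable (fun k : ℕ => (k:ℝ)^2 * (1/4:ℝ)^k) :=
    summable_pow_mul_geometric_of_norm_lt_one 2 (by rw [Real.norm_eq_abs, abs_of_nonneg]; norm_num; norm_num)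
  have := ((h0.mul_left c0).add ((h1.mul_left c1).add (h2.mul_left c2)))
  refine this.congr fun k => ?_
  push_cast
  ring

lemma wzF_abs_le (n k : ℕ) :
    |wzF n k| ≤ (poch (1/2) n ^ 4 / poch 2 n ^ 4) *
      ((1/4:ℝ)^k * ((8*(n:ℝ)^2 + 28*n + 29 + (24*n+48)*k + 20*(k:ℝ)^2)/8)) := by
  have hpoly : (0:ℝ) ≤ (8*(n:ℝ)^2 + 28*n + 29 + (24*n+48)*k + 20*(k:ℝ)^2)/8 := by positivity
  rw [wzF, abs_mul, abs_of_nonneg hpoly]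
  calc |wzK n k| * ((8*(n:ℝ)^2 + 28*n + 29 + (24*n+48)*k + 20*(k:ℝ)^2)/8)
      ≤ ((1/4:ℝ)^k * (poch (1/2) n ^ 4 / poch 2 n ^ 4)) *
        ((8*(n:ℝ)^2 + 28*n + 29 + (24*n+48)*k + 20*(k:ℝ)^2)/8) :=
        mul_le_mul_of_nonneg_right (wzK_abs_le n k) hpoly
    _ = _ := by ring

lemma wzG_abs_le (n k : ℕ) :
    |wzG n k| ≤ (poch (1/2) n ^ 4 / poch 2 n ^ 4) *
      ((1/4:ℝ)^k * (3 + 4*(n:ℝ) + (5+4*(n:ℝ))*k + 2*(k:ℝ)^2)) := by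
  have hpoly : (0:ℝ) ≤ 3 + 4*(n:ℝ) + (5+4*(n:ℝ))*k + 2*(k:ℝ)^2 := by positivity
  rw [wzG, abs_mul, abs_of_nonneg hpoly]
  calc |wzK n k| * (3 + 4*(n:ℝ) + (5+4*(n:ℝ))*k + 2*(k:ℝ)^2)
      ≤ ((1/4:ℝ)^k * (poch (1/2) n ^ 4 / poch 2 n ^ 4)) *
        (3 + 4*(n:ℝ) + (5+4*(n:ℝ))*k + 2*(k:ℝ)^2) :=
        mul_le_mul_of_nonneg_right (wzK_abs_le n k) hpoly
    _ = _ := by ring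

lemma summable_wzF (n : ℕ) : Summable (fun k => wzF n k) := by
  have hB : Summable (fun k : ℕ => (poch (1/2) n ^ 4 / poch 2 n ^ 4) *
      ((1/4:ℝ)^k * ((8*(n:ℝ)^2 + 28*n + 29 + (24*n+48)*k + 20*(k:ℝ)^2)/8))) := by
    have := (summable_quad ((8*(n:ℝ)^2 + 28*n + 29)/8) ((24*(n:ℝ)+48)/8) (20/8)).mul_left
      (poch (1/2) n ^ 4 / poch 2 n ^ 4)
    refine this.congr fun k => ?_
    ring
  exact Summable.of_norm_bounded hB (fun k => wzF_abs_le n k)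

lemma summable_wzG (n : ℕ) : Summable (fun k => wzG n k) := by
  have hB : Summable (fun k : ℕ => (poch (1/2) n ^ 4 / poch 2 n ^ 4) *
      ((1/4:ℝ)^k * (3 + 4*(n:ℝ) + (5+4*(n:ℝ))*k + 2*(k:ℝ)^2))) := by
    have := (summable_quad (3 + 4*(n:ℝ)) (5+4*(n:ℝ)) 2).mul_left
      (poch (1/2) n ^ 4 / poch 2 n ^ 4)
    refine this.congr fun k => ?_
    ring
  exact Summable.of_norm_bounded hB (fun k => wzG_abs_le n k)

noncomputable def wzA (n : ℕ) : ℝ := ∑' k, wzF n k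

lemma wzG_zero (n : ℕ) : wzG n 0 = poch (1/2) n ^ 4 / poch 2 n ^ 4 * (4*(n:ℝ) + 3) := by
  simp only [wzG, wzK, poch_zero, Nat.cast_zero]
  ring

lemma wzA_step (n : ℕ) :
    wzA (n+1) = wzA n - poch (1/2) n ^ 4 / poch 2 n ^ 4 * (4*(n:ℝ) + 3) := by
  have hF1 := summable_wzF (n+1)
  have hF := summable_wzF n
  have hG := summable_wzG n
  have hsub : HasSum (fun k => wzF (n+1) k - wzF n k) (wzA (n+1) - wzA n) :=
    hF1.hasSum.sub hF.hasSum
  have heq : (fun k => wzF (n+1) k - wzF n k) = (fun k => wzG n (k+1) - wzG n k) :=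
    funext (wz_id n)
  rw [heq] at hsub
  have h1 := hsub.tendsto_sum_nat
  have h2 : ∀ K : ℕ, ∑ k ∈ range K, (wzG n (k+1) - wzG n k) = wzG n K - wzG n 0 :=
    fun K => Finset.sum_range_sub _ _
  simp only [h2] at h1
  have h3 : Tendsto (fun K : ℕ => wzG n K - wzG n 0) atTop (𝓝 (0 - wzG n 0)) :=
    (hG.tendsto_atTop_zero).sub_const _
  have h4 := tendsto_nhds_unique h1 h3
  rw [wzG_zero] at h4
  linarith

lemma wzF_abs_le' (n k : ℕ) :
    |wzF n k| ≤ (1/((n:ℝ)+1)) * ((1/4:ℝ)^k * ((29 + 24*(k:ℝ) + 20*(k:ℝ)^2)/2)) := by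
  have hn : (0:ℝ) ≤ n := Nat.cast_nonneg n
  have hk : (0:ℝ) ≤ k := Nat.cast_nonneg k
  have ha := poch_pos (show (0:ℝ) < 1/2 by norm_num) n
  have hb := poch_pos (show (0:ℝ) < 2 by norm_num) n
  have hr : poch (1/2) n ^ 4 / poch 2 n ^ 4 ≤ (1/((n:ℝ)+1))^4 := by
    rw [← div_pow]
    refine pow_le_pow_left₀ (by positivity) (poch_ratio_le n) 4
  have h1 := wzF_abs_le n k
  have hpoly : (8*(n:ℝ)^2 + 28*n + 29 + (24*n+48)*k + 20*(k:ℝ)^2)/8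
      ≤ ((n:ℝ)+2)^2 * ((29 + 24*(k:ℝ) + 20*(k:ℝ)^2)/8) := by
    nlinarith [mul_nonneg hn hk, mul_nonneg (mul_nonneg hn hn) hk,
      mul_nonneg hn (mul_nonneg hk hk), mul_nonneg (mul_nonneg hn hn) (mul_nonneg hk hk),
      sq_nonneg ((n:ℝ)), sq_nonneg ((k:ℝ))]
  have hcoef : (1/((n:ℝ)+1))^4 * ((n:ℝ)+2)^2 ≤ 4/((n:ℝ)+1) := by
    rw [div_pow, one_pow]
    rw [div_mul_eq_mul_div, one_mul, div_le_div_iff₀ (by positivity) (by positivity)]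
    nlinarith [sq_nonneg ((n:ℝ)), sq_nonneg ((n:ℝ)+1), mul_nonneg hn hn,
      mul_nonneg (mul_nonneg hn hn) hn, mul_nonneg (mul_nonneg (mul_nonneg hn hn) hn) hn]
  calc |wzF n k|
      ≤ (poch (1/2) n ^ 4 / poch 2 n ^ 4) *
        ((1/4:ℝ)^k * ((8*(n:ℝ)^2 + 28*n + 29 + (24*n+48)*k + 20*(k:ℝ)^2)/8)) := h1
    _ ≤ (1/((n:ℝ)+1))^4 * ((1/4:ℝ)^k * (((n:ℝ)+2)^2 * ((29 + 24*(k:ℝ) + 20*(k:ℝ)^2)/8))) := by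
        apply mul_le_mul hr _ (by positivity) (by positivity)
        apply mul_le_mul_of_nonneg_left hpoly (by positivity)
    _ = ((1/((n:ℝ)+1))^4 * ((n:ℝ)+2)^2) * ((1/4:ℝ)^k * ((29 + 24*(k:ℝ) + 20*(k:ℝ)^2)/8)) := by
        ring
    _ ≤ (4/((n:ℝ)+1)) * ((1/4:ℝ)^k * ((29 + 24*(k:ℝ) + 20*(k:ℝ)^2)/8)) := by
        apply mul_le_mul_of_nonneg_right hcoef (by positivity)
    _ = (1/((n:ℝ)+1)) * ((1/4:ℝ)^k * ((29 + 24*(k:ℝ) + 20*(k:ℝ)^2)/2)) := by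
        ring

lemma summable_bound : Summable (fun k : ℕ => (1/4:ℝ)^k * ((29 + 24*(k:ℝ) + 20*(k:ℝ)^2)/2)) := by
  refine (summable_quad (29/2) 12 10).congr fun k => ?_
  ring

lemma wzA_tendsto : Tendsto wzA atTop (𝓝 0) := by
  set C : ℝ := ∑' k : ℕ, (1/4:ℝ)^k * ((29 + 24*(k:ℝ) + 20*(k:ℝ)^2)/2) with hC
  have hbound : ∀ n, |wzA n| ≤ (1/((n:ℝ)+1)) * C := by
    intro n
    have hsum := summable_wzF n
    have h1 : |wzA n| ≤ ∑' k, |wzF n k| := by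
      simpa [wzA] using norm_tsum_le_tsum_norm (f := fun k => wzF n k) (by simpa using hsum.abs)
    have h2 : ∑' k, |wzF n k| ≤ ∑' k : ℕ, (1/((n:ℝ)+1)) * ((1/4:ℝ)^k * ((29 + 24*(k:ℝ) + 20*(k:ℝ)^2)/2)) := by
      refine Summable.tsum_le_tsum (fun k => wzF_abs_le' n k) (by simpa using hsum.abs) ?_
      exact summable_bound.mul_left _
    rw [tsum_mul_left] at h2
    linarith
  have hg : Tendsto (fun n : ℕ => (1/((n:ℝ)+1)) * C) atTop (𝓝 0) := by
    have := tendsto_one_div_add_atTop_nhds_zero_nat.mul_const C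
    simpa using this
  exact squeeze_zero_norm hbound hg

lemma sum_a (N : ℕ) :
    ∑ n ∈ range N, poch (1/2) n ^ 4 / poch 2 n ^ 4 * (4*(n:ℝ) + 3) = wzA 0 - wzA N := by
  induction N with
  | zero => simp
  | succ N ih =>
      rw [Finset.sum_range_succ, ih, wzA_step]
      ring

theorem acceleration_special_case :
    ∃ S T : ℝ,
      HasSum (fun k : ℕ =>
        (poch (1/2) k) ^ 4 / (poch 2 k) ^ 4 * (4 * (k : ℝ) + 3)) S ∧
      HasSum (fun j : ℕ =>
        (-1/4 : ℝ) ^ j * (poch (3/2) j) ^ 5 / (poch 2 j) ^ 5 *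
          (20 * (j : ℝ) ^ 2 + 48 * j + 29)) T ∧
      S = 1/8 * T := by
  refine ⟨wzA 0, 8 * wzA 0, ?_, ?_, by ring⟩
  · have hnn : ∀ n : ℕ, 0 ≤ poch (1/2) n ^ 4 / poch 2 n ^ 4 * (4 * (n:ℝ) + 3) := by
      intro n
      have ha := poch_pos (show (0:ℝ) < 1/2 by norm_num) n
      have hb := poch_pos (show (0:ℝ) < 2 by norm_num) n
      have hn : (0:ℝ) ≤ n := Nat.cast_nonneg n
      positivity
    rw [hasSum_iff_tendsto_nat_of_nonneg hnn]
    have ht : Tendsto (fun N : ℕ => wzA 0 - wzA N) atTop (𝓝 (wzA 0 - 0)) :=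
      tendsto_const_nhds.sub wzA_tendsto
    rw [sub_zero] at ht
    refine ht.congr fun N => ?_
    rw [← sum_a N]
  · have h := (summable_wzF 0).hasSum.mul_left 8
    have hb : (fun j : ℕ => 8 * wzF 0 j) = (fun j : ℕ =>
        (-1/4 : ℝ) ^ j * (poch (3/2) j) ^ 5 / (poch 2 j) ^ 5 *
          (20 * (j : ℝ) ^ 2 + 48 * j + 29)) := by
      funext j
      have he := poch_pos (show (0:ℝ) < 2 by norm_num) j
      have he' : poch 2 j ≠ 0 := ne_of_gt he
      simp only [wzF, wzK, poch_zero, Nat.cast_zero, add_zero]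
      field_simp
      ring
    rw [hb] at h
    exact h
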